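/- Let Y be a measurable space, π₀ a probability measure on Y, and r : Y → ℝ measurable, with π₀ a continuous model for r. Let β > 0, let Φ : [0,1] → ℝ be bounded measurable, set C := C_{r,π₀}, Z := ∫₀¹ e^{Φ(u)/β} du, and let π* be the probability measure with density y ↦ e^{Φ(C(y))/β}/Z with respect to π₀. Then for every N ≥ 1, the Worst-of-N win rate of π* against π₀ satisfies (π*)^{⊗N} ⊗ π₀^{⊗N}{((y₁,…,y_N),(z₁,…,z_N)) : min_i r(y_i) > min_j r(z_j)} = N·∫₀¹ (1 − F_{Φ,β}(u))^N · (1−u)^{N−1} du, and the event min_i r(y_i) = min_j r(z_j) has probability 0. -/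

import Mathlib

open MeasureTheory

open Set Filter Topology
open scoped ENNReal NNReal

lemma unif_aux (μ : Measure ℝ) [IsProbabilityMeasure μ] (hatom : ∀ t : ℝ, μ {t} = 0)
    {G : ℝ → ℝ} (hG : ∀ t, μ (Set.Iio t) = ENNReal.ofReal (G t))
    (hGmono : Monotone G)
    {c : ℝ} (hc0 : 0 ≤ c) (hc1 : c ≤ 1) :
    μ {t | G t ≤ c} = ENNReal.ofReal c := by
  set A : Set ℝ := {t | G t ≤ c} with hA
  have hIic : ∀ t, μ (Set.Iic t) = ENNReal.ofReal (G t) := by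
    intro t
    have h1 : μ (Set.Iic t) ≤ μ (Set.Iio t) := by
      rw [← Set.Iio_union_right]
      calc μ (Set.Iio t ∪ {t}) ≤ μ (Set.Iio t) + μ {t} := measure_union_le _ _
        _ = μ (Set.Iio t) := by rw [hatom t, add_zero]
    rw [le_antisymm h1 (measure_mono Set.Iio_subset_Iic_self), hG]
  have hIio_lim : ∀ a : ℝ, Tendsto (fun n : ℕ => μ (Set.Iio (a - 1/(n+1)))) atTop
      (𝓝 (μ (Set.Iio a))) := by
    intro a
    have hmono : Monotone fun n : ℕ => Set.Iio (a - 1/(n+1)) := by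
      intro m n hmn
      apply Set.Iio_subset_Iio
      have hc : (m:ℝ) ≤ n := Nat.cast_le.mpr hmn
      have : (1:ℝ)/(n+1) ≤ 1/(m+1) := by
        apply one_div_le_one_div_of_le
        · positivity
        · linarith
      linarith
    have hU : (⋃ n : ℕ, Set.Iio (a - 1/(n+1))) = Set.Iio a := by
      ext x
      simp only [Set.mem_iUnion, Set.mem_Iio]
      constructor
      · rintro ⟨n, hn⟩
        have : (0:ℝ) < 1/(n+1) := by positivity
        linarith
      · intro hx
        obtain ⟨n, hn⟩ := exists_nat_one_div_lt (show (0:ℝ) < a - x by linarith)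
        exact ⟨n, by push_cast at hn ⊢; linarith⟩
    have := tendsto_measure_iUnion_atTop (μ := μ) hmono
    rwa [hU] at this
  have hIic_lim : ∀ a : ℝ, Tendsto (fun n : ℕ => μ (Set.Iio (a + 1/(n+1)))) atTop
      (𝓝 (μ (Set.Iic a))) := by
    intro a
    have hanti : Antitone fun n : ℕ => Set.Iio (a + 1/(n+1)) := by
      intro m n hmn
      apply Set.Iio_subset_Iio
      have hc : (m:ℝ) ≤ n := Nat.cast_le.mpr hmn
      have : (1:ℝ)/(n+1) ≤ 1/(m+1) := by
        apply one_div_le_one_div_of_le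
        · positivity
        · linarith
      linarith
    have hI : (⋂ n : ℕ, Set.Iio (a + 1/(n+1))) = Set.Iic a := by
      ext x
      simp only [Set.mem_iInter, Set.mem_Iio, Set.mem_Iic]
      constructor
      · intro h
        by_contra hx
        push_neg at hx
        obtain ⟨n, hn⟩ := exists_nat_one_div_lt (show (0:ℝ) < x - a by linarith)
        have := h n
        push_cast at hn
        linarith
      · intro h n
        have : (0:ℝ) < 1/(n+1) := by positivity
        linarith
    have := tendsto_measure_iInter_atTop (μ := μ)
      (fun n => measurableSet_Iio.nullMeasurableSet) hanti ⟨0, measure_ne_top μ _⟩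
    rwa [hI] at this
  apply le_antisymm
  · -- μ A ≤ ofReal c
    by_cases hAne : A.Nonempty
    · by_cases hAbdd : BddAbove A
      · set a := sSup A with ha
        by_cases hGa : G a ≤ c
        · have hsub : A ⊆ Set.Iic a := fun t ht => le_csSup hAbdd ht
          calc μ A ≤ μ (Set.Iic a) := measure_mono hsub
            _ = ENNReal.ofReal (G a) := hIic a
            _ ≤ ENNReal.ofReal c := ENNReal.ofReal_le_ofReal hGa
        · have hsub : A ⊆ Set.Iio a := by
            intro t ht
            rcases lt_or_eq_of_le (le_csSup hAbdd ht) with h | h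
            · exact h
            · exact absurd (by rwa [h] at ht) hGa
          refine le_trans (measure_mono hsub) (le_of_tendsto (hIio_lim a) ?_)
          filter_upwards with n
          have hlt : a - 1/(n+1) < a := by
            have : (0:ℝ) < 1/(n+1) := by positivity
            linarith
          obtain ⟨t, htA, htlt⟩ := exists_lt_of_lt_csSup hAne hlt
          calc μ (Set.Iio (a - 1/(n+1))) = ENNReal.ofReal (G (a - 1/(n+1))) := hG _
            _ ≤ ENNReal.ofReal (G t) := ENNReal.ofReal_le_ofReal (hGmono htlt.le)
            _ ≤ ENNReal.ofReal c := ENNReal.ofReal_le_ofReal htA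
      · -- A unbounded above
        have huniv : μ Set.univ ≤ ENNReal.ofReal c := by
          have hmono : Monotone fun n : ℕ => Set.Iio ((n:ℝ)) := fun m n h =>
            Set.Iio_subset_Iio (by exact_mod_cast h)
          have hU : (⋃ n : ℕ, Set.Iio ((n:ℝ))) = Set.univ := by
            ext x
            simp only [Set.mem_iUnion, Set.mem_Iio, Set.mem_univ, iff_true]
            obtain ⟨n, hn⟩ := exists_nat_gt x
            exact ⟨n, hn⟩
          have hlim := tendsto_measure_iUnion_atTop (μ := μ) hmono
          rw [hU] at hlim
          refine le_of_tendsto hlim ?_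
          filter_upwards with n
          rw [not_bddAbove_iff] at hAbdd
          obtain ⟨t, htA, htn⟩ := hAbdd n
          calc μ (Set.Iio (n:ℝ)) = ENNReal.ofReal (G n) := hG _
            _ ≤ ENNReal.ofReal (G t) := ENNReal.ofReal_le_ofReal (hGmono htn.le)
            _ ≤ ENNReal.ofReal c := ENNReal.ofReal_le_ofReal htA
        exact le_trans (measure_mono (Set.subset_univ A)) huniv
    · rw [Set.not_nonempty_iff_eq_empty] at hAne
      rw [hAne]
      simp
  · -- ofReal c ≤ μ A
    by_cases hB : ∃ t, c < G t
    · set B : Set ℝ := {t | c < G t} with hBdef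
      have hBne : B.Nonempty := hB
      by_cases hBbdd : BddBelow B
      · set b := sInf B with hb
        have hsub : Set.Iio b ⊆ A := by
          intro t ht
          by_contra htA
          have : t ∈ B := by
            simp only [hBdef, Set.mem_setOf_eq]
            simp only [hA, Set.mem_setOf_eq, not_le] at htA
            exact htA
          exact absurd (csInf_le hBbdd this) (not_le.mpr ht)
        have hIicb : ENNReal.ofReal c ≤ μ (Set.Iic b) := by
          refine ge_of_tendsto (hIic_lim b) ?_
          filter_upwards with n
          have hlt : b < b + 1/(n+1) := by
            have : (0:ℝ) < 1/(n+1) := by positivity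
            linarith
          obtain ⟨t, htB, htlt⟩ := (csInf_lt_iff hBbdd hBne).mp hlt
          calc ENNReal.ofReal c ≤ ENNReal.ofReal (G t) := ENNReal.ofReal_le_ofReal htB.le
            _ ≤ ENNReal.ofReal (G (b + 1/(n+1))) := ENNReal.ofReal_le_ofReal (hGmono htlt.le)
            _ = μ (Set.Iio (b + 1/(n+1))) := (hG _).symm
        calc ENNReal.ofReal c ≤ μ (Set.Iic b) := hIicb
          _ = μ (Set.Iio b) := by rw [hIic, hG]
          _ ≤ μ A := measure_mono hsub
      · -- B not bounded below : G t > c everywhere (B upward closed), so c ≤ 0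
        have hall : ∀ t, c < G t := by
          intro t
          rw [not_bddBelow_iff] at hBbdd
          obtain ⟨s, hsB, hst⟩ := hBbdd t
          exact lt_of_lt_of_le hsB (hGmono hst.le)
        have hc0' : ENNReal.ofReal c ≤ 0 := by
          have hanti : Antitone fun n : ℕ => Set.Iio (-(n:ℝ)) := fun m n h =>
            Set.Iio_subset_Iio (by have : (m:ℝ) ≤ n := Nat.cast_le.mpr h; linarith)
          have hI : (⋂ n : ℕ, Set.Iio (-(n:ℝ))) = ∅ := by
            ext x
            simp only [Set.mem_iInter, Set.mem_Iio, Set.mem_empty_iff_false, iff_false, not_forall,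
              not_lt]
            obtain ⟨n, hn⟩ := exists_nat_gt (-x)
            exact ⟨n, by linarith⟩
          have hlim := tendsto_measure_iInter_atTop (μ := μ)
            (fun n => measurableSet_Iio.nullMeasurableSet) hanti ⟨0, measure_ne_top μ _⟩
          rw [hI] at hlim
          simp only [measure_empty] at hlim
          refine ge_of_tendsto hlim ?_
          filter_upwards with n
          calc ENNReal.ofReal c ≤ ENNReal.ofReal (G (-(n:ℝ))) :=
              ENNReal.ofReal_le_ofReal (hall _).le
            _ = μ (Set.Iio (-(n:ℝ))) := (hG _).symm
            _ = (⇑μ ∘ fun n : ℕ => Set.Iio (-(n:ℝ))) n := rfl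
        exact le_trans hc0' zero_le
    · push_neg at hB
      have : A = Set.univ := Set.eq_univ_of_forall fun t => hB t
      rw [this, measure_univ]
      exact le_trans (ENNReal.ofReal_le_ofReal hc1) (by simp)

/-- In the setting of Statement 10, for every `N ≥ 1` the Worst-of-`N` win
rate of `π*` against `π₀` equals `N·∫₀¹ (1 − F_{Φ,β}(u))^N (1−u)^{N−1} du`, and ties have
probability 0. -/
theorem stmt_11 {Y : Type*} [MeasurableSpace Y]
    (π₀ : Measure Y) [IsProbabilityMeasure π₀]
    (r : Y → ℝ) (hr : Measurable r)
    (hcont : ∀ t : ℝ, π₀ {z | r z = t} = 0)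
    (β : ℝ) (hβ : 0 < β)
    (Φ : ℝ → ℝ) (hΦm : Measurable Φ)
    (hΦb : ∃ M, ∀ u ∈ Set.Icc (0 : ℝ) 1, |Φ u| ≤ M)
    (C : Y → ℝ)
    (hC : ∀ y, C y = (π₀ {z | r z < r y}).toReal + (1 / 2) * (π₀ {z | r z = r y}).toReal)
    (Z : ℝ) (hZ : Z = ∫ u in (0 : ℝ)..1, Real.exp (Φ u / β))
    (πstar : Measure Y)
    (hπstar : πstar = π₀.withDensity fun y => ENNReal.ofReal (Real.exp (Φ (C y) / β) / Z))
    (F : ℝ → ℝ)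
    (hF : ∀ u, F u = (∫ t in (0 : ℝ)..u, Real.exp (Φ t / β)) / Z)
    (N : ℕ) (hN : 1 ≤ N) :
    (((Measure.pi fun _ : Fin N => πstar).prod (Measure.pi fun _ : Fin N => π₀))
        {p : (Fin N → Y) × (Fin N → Y) | (⨅ j, r (p.2 j)) < ⨅ i, r (p.1 i)}).toReal
      = N * ∫ u in (0 : ℝ)..1, (1 - F u) ^ N * (1 - u) ^ (N - 1)
    ∧ ((Measure.pi fun _ : Fin N => πstar).prod (Measure.pi fun _ : Fin N => π₀))
        {p : (Fin N → Y) × (Fin N → Y) | (⨅ i, r (p.1 i)) = ⨅ j, r (p.2 j)} = 0 := by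
  classical
  obtain ⟨M, hM⟩ := hΦb
  set μ : Measure ℝ := Measure.map r π₀ with hμdef
  haveI : IsProbabilityMeasure μ := Measure.isProbabilityMeasure_map hr.aemeasurable
  set G : ℝ → ℝ := fun t => (μ (Set.Iio t)).toReal with hGdef
  have hμIio : ∀ t, μ (Set.Iio t) = ENNReal.ofReal (G t) := fun t =>
    (ENNReal.ofReal_toReal (measure_ne_top μ _)).symm
  have hatomμ : ∀ t : ℝ, μ {t} = 0 := by
    intro t
    rw [hμdef, Measure.map_apply hr (measurableSet_singleton t)]
    exact hcont t
  have hGmono : Monotone G := by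
    intro s t hst
    exact ENNReal.toReal_mono (measure_ne_top μ _) (measure_mono (Set.Iio_subset_Iio hst))
  have hGnn : ∀ t, 0 ≤ G t := fun t => ENNReal.toReal_nonneg
  have hGle1 : ∀ t, G t ≤ 1 := by
    intro t
    have := prob_le_one (μ := μ) (s := Set.Iio t)
    have h2 := ENNReal.toReal_mono (by simp) this
    simpa using h2
  have hπ₀Iio : ∀ t : ℝ, π₀ {z | r z < t} = ENNReal.ofReal (G t) := by
    intro t
    rw [← hμIio, hμdef, Measure.map_apply hr measurableSet_Iio]
    rfl
  have hCeq : ∀ y, C y = G (r y) := by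
    intro y
    rw [hC y, hcont (r y)]
    simp [hπ₀Iio (r y), ENNReal.toReal_ofReal (hGnn (r y))]
  have hGmeas : Measurable G := hGmono.measurable
  have hCmeas : Measurable C := by
    have : C = fun y => G (r y) := funext hCeq
    rw [this]; exact hGmeas.comp hr
  -- the law of C under π₀ is uniform on (0,1]
  have hmap : Measure.map C π₀ = volume.restrict (Set.Ioc 0 1) := by
    haveI : IsProbabilityMeasure (Measure.map C π₀) :=
      Measure.isProbabilityMeasure_map hCmeas.aemeasurable
    refine MeasureTheory.Measure.ext_of_Iic (Measure.map C π₀) _ (fun c => ?_)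
    rw [Measure.map_apply hCmeas measurableSet_Iic, Measure.restrict_apply measurableSet_Iic]
    have hpre : C ⁻¹' Set.Iic c = r ⁻¹' {t | G t ≤ c} := by
      ext y; simp [hCeq y]
    rcases lt_or_ge c 0 with hc | hc0
    · have h1 : C ⁻¹' Set.Iic c = ∅ := by
        ext y
        simp only [Set.mem_preimage, Set.mem_Iic, Set.mem_empty_iff_false, iff_false, not_le]
        calc c < 0 := hc
          _ ≤ G (r y) := hGnn _
          _ = C y := (hCeq y).symm
      have h2 : Set.Iic c ∩ Set.Ioc (0:ℝ) 1 = ∅ := by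
        apply Set.eq_empty_iff_forall_notMem.mpr
        rintro x ⟨hx, h0, -⟩
        rw [Set.mem_Iic] at hx
        linarith
      rw [h1, h2]
      simp
    · rcases le_or_gt c 1 with hc1 | hc1
      · have h1 : π₀ (C ⁻¹' Set.Iic c) = ENNReal.ofReal c := by
          have hms : MeasurableSet {t : ℝ | G t ≤ c} := hGmeas measurableSet_Iic
          rw [hpre, ← Measure.map_apply hr hms]
          exact unif_aux μ hatomμ hμIio hGmono hc0 hc1
        have h2 : Set.Iic c ∩ Set.Ioc (0:ℝ) 1 = Set.Ioc 0 c := by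
          ext x
          simp only [Set.mem_inter_iff, Set.mem_Iic, Set.mem_Ioc]
          constructor
          · rintro ⟨h, h0, h1'⟩; exact ⟨h0, h⟩
          · rintro ⟨h0, h⟩; exact ⟨h, h0, le_trans h hc1⟩
        rw [h1, h2, Real.volume_Ioc, sub_zero]
      · have h1 : C ⁻¹' Set.Iic c = Set.univ := by
          apply Set.eq_univ_of_forall
          intro y
          simp only [Set.mem_preimage, Set.mem_Iic, hCeq y]
          linarith [hGle1 (r y)]
        have h2 : Set.Iic c ∩ Set.Ioc (0:ℝ) 1 = Set.Ioc 0 1 := by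
          apply Set.inter_eq_self_of_subset_right
          intro x hx
          simp only [Set.mem_Iic]
          rcases hx with ⟨_, h⟩
          linarith
        rw [h1, h2, Real.volume_Ioc, measure_univ]
        norm_num
  -- integrability of the exponential weight
  set E : ℝ → ℝ := fun t => Real.exp (Φ t / β) with hEdef
  have hEmeas : Measurable E := (hΦm.div_const β).exp
  have hEpos : ∀ t, 0 < E t := fun t => Real.exp_pos _
  have hEbdd : ∀ u ∈ Set.Icc (0:ℝ) 1, E u ≤ Real.exp (M / β) := by
    intro u hu
    apply Real.exp_le_exp.mpr
    have h2 := (abs_le.mp (hM u hu)).2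
    exact (div_le_div_iff_of_pos_right hβ).mpr h2
  have hEint : IntegrableOn E (Set.Icc 0 1) volume := by
    apply Integrable.mono' (integrable_const (Real.exp (M / β)))
    · exact hEmeas.aestronglyMeasurable
    · refine (ae_restrict_iff' measurableSet_Icc).mpr ?_
      filter_upwards with u hu
      rw [Real.norm_eq_abs, abs_of_pos (hEpos u)]
      exact hEbdd u hu
  have hEii : ∀ a b : ℝ, a ∈ Set.Icc (0:ℝ) 1 → b ∈ Set.Icc (0:ℝ) 1 →
      IntervalIntegrable E volume a b := by
    intro a b ha hb
    exact (hEint.mono_set (Set.uIcc_subset_Icc ha hb)).intervalIntegrable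
  have h01 : (0:ℝ) ∈ Set.Icc (0:ℝ) 1 := ⟨le_refl 0, zero_le_one⟩
  have h11 : (1:ℝ) ∈ Set.Icc (0:ℝ) 1 := ⟨zero_le_one, le_refl 1⟩
  have hZpos : 0 < Z := by
    have hmono := intervalIntegral.integral_mono_on (μ := volume) (a := 0) (b := 1)
      (f := fun _ => Real.exp (-M / β)) (g := E) zero_le_one intervalIntegrable_const
      (hEii 0 1 h01 h11) ?_
    · have : ∫ _ in (0:ℝ)..1, Real.exp (-M / β) = Real.exp (-M / β) := by simp
      rw [this] at hmono
      rw [hZ]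
      calc (0:ℝ) < Real.exp (-M / β) := Real.exp_pos _
        _ ≤ _ := hmono
    · intro x hx
      apply Real.exp_le_exp.mpr
      have h2 := (abs_le.mp (hM x hx)).1
      exact (div_le_div_iff_of_pos_right hβ).mpr h2
  have hZnn : 0 ≤ Z := hZpos.le
  have hsplit : ∀ u ∈ Set.Icc (0:ℝ) 1,
      (∫ t in (0:ℝ)..u, E t) + (∫ t in u..1, E t) = Z := by
    intro u hu
    rw [hZ]
    exact intervalIntegral.integral_add_adjacent_intervals (hEii 0 u h01 hu) (hEii u 1 hu h11)
  have hFnn : ∀ u ∈ Set.Icc (0:ℝ) 1, 0 ≤ F u := by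
    intro u hu
    rw [hF]
    apply div_nonneg _ hZnn
    exact intervalIntegral.integral_nonneg hu.1 (fun t _ => (hEpos t).le)
  have h1mF : ∀ u ∈ Set.Icc (0:ℝ) 1, 1 - F u = (∫ t in u..1, E t) / Z := by
    intro u hu
    rw [hF]
    field_simp
    linarith [hsplit u hu]
  have hFle1 : ∀ u ∈ Set.Icc (0:ℝ) 1, F u ≤ 1 := by
    intro u hu
    have h2 := h1mF u hu
    have h3 : 0 ≤ (∫ t in u..1, E t) / Z :=
      div_nonneg (intervalIntegral.integral_nonneg hu.2 (fun t _ => (hEpos t).le)) hZnn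
    linarith
  -- the density of πstar
  set f : ℝ → ℝ≥0∞ := fun t => ENNReal.ofReal (E t / Z) with hfdef
  have hfmeas : Measurable f := (hEmeas.div_const Z).ennreal_ofReal
  have hπstar_pre : ∀ s : Set ℝ, MeasurableSet s →
      πstar (C ⁻¹' s) = ∫⁻ t in s ∩ Set.Ioc 0 1, f t ∂volume := by
    intro s hs
    rw [hπstar, withDensity_apply _ (hCmeas hs)]
    have hrw : (fun y => ENNReal.ofReal (Real.exp (Φ (C y) / β) / Z)) = fun y => f (C y) := rfl
    calc ∫⁻ y in C ⁻¹' s, ENNReal.ofReal (Real.exp (Φ (C y) / β) / Z) ∂π₀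
        = ∫⁻ y in C ⁻¹' s, f (C y) ∂π₀ := by rw [hrw]
      _ = ∫⁻ t in s, f t ∂(Measure.map C π₀) := (setLIntegral_map hs hfmeas hCmeas).symm
      _ = ∫⁻ t in s, f t ∂(volume.restrict (Set.Ioc 0 1)) := by rw [hmap]
      _ = ∫⁻ t in s ∩ Set.Ioc 0 1, f t ∂volume := by rw [Measure.restrict_restrict hs]
  have hIoc_int : ∀ a b : ℝ, 0 ≤ a → b ≤ 1 → a ≤ b →
      ∫⁻ t in Set.Ioc a b, f t ∂volume = ENNReal.ofReal ((∫ t in a..b, E t) / Z) := by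
    intro a b ha hb hab
    have hsub : Set.Ioc a b ⊆ Set.Icc (0:ℝ) 1 := fun x hx => ⟨le_trans ha hx.1.le,
      le_trans hx.2 hb⟩
    have hint : Integrable (fun t => E t / Z) (volume.restrict (Set.Ioc a b)) :=
      (hEint.mono_set hsub).div_const Z
    have hnn : 0 ≤ᵐ[volume.restrict (Set.Ioc a b)] (fun t => E t / Z) :=
      Filter.Eventually.of_forall (fun t => div_nonneg (hEpos t).le hZnn)
    rw [hfdef, ← MeasureTheory.ofReal_integral_eq_lintegral_ofReal hint hnn]
    congr 1
    rw [intervalIntegral.integral_of_le hab, ← integral_div]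
  have hπstar_prob : IsProbabilityMeasure πstar := by
    constructor
    have huniv : (Set.univ : Set Y) = C ⁻¹' Set.univ := rfl
    rw [huniv, hπstar_pre Set.univ MeasurableSet.univ, Set.univ_inter,
      hIoc_int 0 1 le_rfl le_rfl zero_le_one, ← hZ, div_self hZpos.ne']
    simp
  have hπstarC : ∀ u : ℝ, 0 ≤ u → u ≤ 1 →
      πstar {y | u < C y} = ENNReal.ofReal (1 - F u) := by
    intro u h0 h1
    have hpre : {y | u < C y} = C ⁻¹' Set.Ioi u := rfl
    have hinter : Set.Ioi u ∩ Set.Ioc (0:ℝ) 1 = Set.Ioc u 1 := by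
      ext x
      simp only [Set.mem_inter_iff, Set.mem_Ioi, Set.mem_Ioc]
      constructor
      · rintro ⟨hxu, _, hx1⟩; exact ⟨hxu, hx1⟩
      · rintro ⟨hxu, hx1⟩; exact ⟨hxu, lt_of_le_of_lt h0 hxu, hx1⟩
    rw [hpre, hπstar_pre _ measurableSet_Ioi, hinter, hIoc_int u 1 h0 le_rfl h1,
      h1mF u ⟨h0, h1⟩]
  -- the minimum over N coordinates
  haveI := hπstar_prob
  have hNpos : 0 < N := hN
  haveI : Nonempty (Fin N) := Fin.pos_iff_nonempty.mp hNpos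
  set m : (Fin N → Y) → ℝ := fun v => ⨅ i, r (v i) with hmdef
  have hbdd : ∀ v : Fin N → Y, BddBelow (Set.range fun i => r (v i)) := fun v =>
    (Set.finite_range _).bddBelow
  have hm_le : ∀ (v : Fin N → Y) (i : Fin N), m v ≤ r (v i) := fun v i => ciInf_le (hbdd v) i
  have hm_attain : ∀ v : Fin N → Y, ∃ i, m v = r (v i) := by
    intro v
    obtain ⟨i, hi⟩ := Finite.exists_min (fun i => r (v i))
    exact ⟨i, le_antisymm (hm_le v i) (le_ciInf hi)⟩
  have hm_le_iff : ∀ (v : Fin N → Y) (t : ℝ), t ≤ m v ↔ ∀ i, t ≤ r (v i) := fun v t =>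
    le_ciInf_iff (hbdd v)
  have hmmeas : Measurable m := Measurable.iInf (fun i => hr.comp (measurable_pi_apply i))
  set νY : Measure (Fin N → Y) := Measure.pi (fun _ : Fin N => πstar) with hνY
  set ν₀ : Measure (Fin N → Y) := Measure.pi (fun _ : Fin N => π₀) with hν₀
  haveI : IsProbabilityMeasure νY := by rw [hνY]; infer_instance
  haveI : IsProbabilityMeasure ν₀ := by rw [hν₀]; infer_instance
  -- measure that all N coordinates have reward at least t
  have hν₀_ge : ∀ t : ℝ, ν₀ {z | t ≤ m z} = ENNReal.ofReal ((1 - G t) ^ N) := by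
    intro t
    have hset : {z : Fin N → Y | t ≤ m z} =
        Set.pi Set.univ (fun _ : Fin N => {w | t ≤ r w}) := by
      ext z
      simp only [Set.mem_setOf_eq, Set.mem_univ_pi]
      exact hm_le_iff z t
    rw [hset, Measure.pi_pi]
    have hone : π₀ {w | t ≤ r w} = ENNReal.ofReal (1 - G t) := by
      have hc : {w : Y | t ≤ r w} = {w | r w < t}ᶜ := by ext w; simp [not_lt]
      have hms : MeasurableSet {w : Y | r w < t} := hr measurableSet_Iio
      rw [hc, measure_compl hms (measure_ne_top _ _), measure_univ, hπ₀Iio t,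
        ENNReal.ofReal_sub _ (hGnn t), ENNReal.ofReal_one]
    rw [hone, Finset.prod_const, Finset.card_univ, Fintype.card_fin,
      ← ENNReal.ofReal_pow (by linarith [hGle1 t])]
  have hν₀_lt : ∀ t : ℝ, ν₀ {z | m z < t} = 1 - ENNReal.ofReal ((1 - G t) ^ N) := by
    intro t
    have hc : {z : Fin N → Y | m z < t} = {z | t ≤ m z}ᶜ := by ext z; simp [not_le]
    have hms : MeasurableSet {z : Fin N → Y | t ≤ m z} :=
      measurableSet_le measurable_const hmmeas
    rw [hc, measure_compl hms (measure_ne_top _ _), measure_univ, hν₀_ge]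
  -- no ties
  have hν₀_eq : ∀ t : ℝ, ν₀ {z | m z = t} = 0 := by
    intro t
    have hsub : {z : Fin N → Y | m z = t} ⊆ ⋃ j : Fin N, {z | r (z j) = t} := by
      intro z hz
      obtain ⟨i, hi⟩ := hm_attain z
      exact Set.mem_iUnion.mpr ⟨i, by rw [Set.mem_setOf_eq, ← hi]; exact hz⟩
    apply measure_mono_null hsub
    apply measure_iUnion_null
    intro j
    have hset : {z : Fin N → Y | r (z j) = t} = Set.pi Set.univ
        (Function.update (fun _ : Fin N => (Set.univ : Set Y)) j {w | r w = t}) := by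
      ext z
      simp only [Set.mem_setOf_eq, Set.mem_univ_pi]
      constructor
      · intro h i
        rcases eq_or_ne i j with rfl | hij
        · rw [Function.update_self]; exact h
        · rw [Function.update_of_ne hij]; trivial
      · intro h
        have := h j
        rwa [Function.update_self] at this
    rw [hset, Measure.pi_pi]
    apply Finset.prod_eq_zero (Finset.mem_univ j)
    rw [Function.update_self]
    exact hcont t
  have htie : (νY.prod ν₀) {p : (Fin N → Y) × (Fin N → Y) | m p.1 = m p.2} = 0 := by
    have hSmeas : MeasurableSet {p : (Fin N → Y) × (Fin N → Y) | m p.1 = m p.2} :=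
      measurableSet_eq_fun (hmmeas.comp measurable_fst) (hmmeas.comp measurable_snd)
    rw [Measure.prod_apply hSmeas]
    have hzero : ∀ v : Fin N → Y,
        ν₀ (Prod.mk v ⁻¹' {p : (Fin N → Y) × (Fin N → Y) | m p.1 = m p.2}) = 0 := by
      intro v
      have hpre : Prod.mk v ⁻¹' {p : (Fin N → Y) × (Fin N → Y) | m p.1 = m p.2}
          = {z | m z = m v} := by
        ext z
        simp only [Set.mem_preimage, Set.mem_setOf_eq]
        exact eq_comm
      rw [hpre, hν₀_eq]
    simp only [hzero, lintegral_zero]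
  -- FTC computation
  have hqcont : Continuous (fun u : ℝ => (N:ℝ) * (1-u)^(N-1)) := by
    apply continuous_const.mul
    exact (continuous_const.sub continuous_id).pow (N-1)
  have hFTC : ∀ a : ℝ, 0 ≤ a → a ≤ 1 →
      (∫ u in (0:ℝ)..a, (N:ℝ) * (1-u)^(N-1)) = 1 - (1-a)^N := by
    intro a _ _
    have hderiv : ∀ u ∈ Set.uIcc (0:ℝ) a,
        HasDerivAt (fun x : ℝ => -((1-x)^N)) ((N:ℝ) * (1-u)^(N-1)) u := by
      intro u _
      have h1 : HasDerivAt (fun x : ℝ => 1 - x) (-1) u := (hasDerivAt_id u).const_sub 1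
      have h2 : HasDerivAt (fun x : ℝ => -((1-x)^N)) (-((N:ℝ) * (1 - u) ^ (N - 1) * -1)) u :=
        (h1.pow N).neg
      convert h2 using 1
      ring
    have hint : IntervalIntegrable (fun u : ℝ => (N:ℝ) * (1-u)^(N-1)) volume 0 a :=
      hqcont.intervalIntegrable 0 a
    rw [intervalIntegral.integral_eq_sub_of_hasDerivAt hderiv hint]
    simp only [one_pow, sub_zero]
    ring
  have hkey : ∀ a : ℝ, 0 ≤ a → a ≤ 1 →
      ENNReal.ofReal (1 - (1-a)^N) = ∫⁻ u in Set.Ioo (0:ℝ) 1,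
        Set.indicator (Set.Iio a) (fun u => ENNReal.ofReal ((N:ℝ) * (1-u)^(N-1))) u ∂volume := by
    intro a h0 h1
    rw [lintegral_indicator measurableSet_Iio, Measure.restrict_restrict measurableSet_Iio]
    have hIoo : Set.Iio a ∩ Set.Ioo (0:ℝ) 1 = Set.Ioo 0 a := by
      ext x
      simp only [Set.mem_inter_iff, Set.mem_Iio, Set.mem_Ioo]
      constructor
      · rintro ⟨hxa, hx0, _⟩; exact ⟨hx0, hxa⟩
      · rintro ⟨hx0, hxa⟩; exact ⟨hxa, hx0, lt_of_lt_of_le hxa h1⟩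
    rw [hIoo]
    have hint : Integrable (fun u : ℝ => (N:ℝ) * (1-u)^(N-1))
        (volume.restrict (Set.Ioo 0 a)) := by
      apply IntegrableOn.mono_set _ Set.Ioo_subset_Ioc_self
      exact (intervalIntegrable_iff_integrableOn_Ioc_of_le h0).mp (hqcont.intervalIntegrable 0 a)
    have hnn : 0 ≤ᵐ[volume.restrict (Set.Ioo 0 a)] (fun u : ℝ => (N:ℝ) * (1-u)^(N-1)) := by
      refine (ae_restrict_iff' measurableSet_Ioo).mpr ?_
      filter_upwards with u hu
      have : u ≤ 1 := le_trans hu.2.le h1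
      exact mul_nonneg (Nat.cast_nonneg N) (pow_nonneg (by linarith) _)
    rw [← MeasureTheory.ofReal_integral_eq_lintegral_ofReal hint hnn]
    congr 1
    rw [← integral_Ioc_eq_integral_Ioo, ← intervalIntegral.integral_of_le h0]
    exact (hFTC a h0 h1).symm
  -- win-rate computation
  set g : ℝ → ℝ≥0∞ := fun u => ENNReal.ofReal ((N:ℝ) * (1-u)^(N-1)) with hgdef
  have hgmeas : Measurable g := hqcont.measurable.ennreal_ofReal
  set T : Set ((Fin N → Y) × ℝ) := {q | q.2 < G (m q.1)} with hTdef
  have hTmeas : MeasurableSet T :=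
    measurableSet_lt measurable_snd ((hGmeas.comp hmmeas).comp measurable_fst)
  have hν_win : ∀ u : ℝ, 0 ≤ u → u ≤ 1 →
      νY {v | u < G (m v)} = ENNReal.ofReal ((1 - F u)^N) := by
    intro u h0 h1
    have hset : {v : Fin N → Y | u < G (m v)} =
        Set.pi Set.univ (fun _ : Fin N => {w | u < C w}) := by
      ext v
      simp only [Set.mem_setOf_eq, Set.mem_univ_pi]
      constructor
      · intro h i
        rw [hCeq]
        exact lt_of_lt_of_le h (hGmono (hm_le v i))
      · intro h
        obtain ⟨i, hi⟩ := hm_attain v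
        have h2 := h i
        rw [hCeq] at h2
        rwa [hi]
    rw [hset, Measure.pi_pi, hπstarC u h0 h1, Finset.prod_const, Finset.card_univ,
      Fintype.card_fin, ← ENNReal.ofReal_pow (by linarith [hFle1 u ⟨h0, h1⟩])]
  have hS1meas : MeasurableSet {p : (Fin N → Y) × (Fin N → Y) | m p.2 < m p.1} :=
    measurableSet_lt (hmmeas.comp measurable_snd) (hmmeas.comp measurable_fst)
  have hmain : (νY.prod ν₀) {p : (Fin N → Y) × (Fin N → Y) | m p.2 < m p.1}
      = ∫⁻ u in Set.Ioo (0:ℝ) 1, g u * νY {v | u < G (m v)} ∂volume := by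
    rw [Measure.prod_apply hS1meas]
    have hstep1 : ∀ v : Fin N → Y,
        ν₀ (Prod.mk v ⁻¹' {p : (Fin N → Y) × (Fin N → Y) | m p.2 < m p.1})
        = ∫⁻ u in Set.Ioo (0:ℝ) 1, Set.indicator T (fun q => g q.2) (v, u) ∂volume := by
      intro v
      have hpre : Prod.mk v ⁻¹' {p : (Fin N → Y) × (Fin N → Y) | m p.2 < m p.1}
          = {z | m z < m v} := rfl
      rw [hpre, hν₀_lt (m v)]
      have hx : (0:ℝ) ≤ (1 - G (m v))^N := pow_nonneg (by linarith [hGle1 (m v)]) N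
      have h2 : (1 : ℝ≥0∞) - ENNReal.ofReal ((1 - G (m v))^N)
          = ENNReal.ofReal (1 - (1 - G (m v))^N) := by
        rw [ENNReal.ofReal_sub _ hx, ENNReal.ofReal_one]
      rw [h2, hkey _ (hGnn (m v)) (hGle1 (m v))]
      apply lintegral_congr
      intro u
      by_cases h : u < G (m v)
      · rw [Set.indicator_of_mem (show u ∈ Set.Iio (G (m v)) from h),
          Set.indicator_of_mem (show (v,u) ∈ T from h)]
      · rw [Set.indicator_of_notMem (show u ∉ Set.Iio (G (m v)) from h),
          Set.indicator_of_notMem (show (v,u) ∉ T from h)]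
    have h4 := lintegral_congr (μ := νY) hstep1
    have hunc : AEMeasurable (Function.uncurry
        (fun (v : Fin N → Y) (u : ℝ) => Set.indicator T (fun q => g q.2) (v, u)))
        (νY.prod (volume.restrict (Set.Ioo (0:ℝ) 1))) := by
      exact ((hgmeas.comp measurable_snd).indicator hTmeas).aemeasurable
    rw [h4, lintegral_lintegral_swap hunc]
    apply lintegral_congr
    intro u
    have hind : ∀ v : Fin N → Y, Set.indicator T (fun q => g q.2) (v, u)
        = Set.indicator {v : Fin N → Y | u < G (m v)} (fun _ => g u) v := by
      intro v
      by_cases h : u < G (m v)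
      · rw [Set.indicator_of_mem (show (v,u) ∈ T from h),
          Set.indicator_of_mem (show v ∈ {v : Fin N → Y | u < G (m v)} from h)]
      · rw [Set.indicator_of_notMem (show (v,u) ∉ T from h),
          Set.indicator_of_notMem (show v ∉ {v : Fin N → Y | u < G (m v)} from h)]
    have hsetmeas : MeasurableSet {v : Fin N → Y | u < G (m v)} :=
      measurableSet_lt measurable_const (hGmeas.comp hmmeas)
    rw [lintegral_congr hind, lintegral_indicator_const hsetmeas]
  have hIooP : (νY.prod ν₀) {p : (Fin N → Y) × (Fin N → Y) | m p.2 < m p.1}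
      = ENNReal.ofReal ((N:ℝ) * ∫ u in (0:ℝ)..1, (1 - F u)^N * (1-u)^(N-1)) := by
    rw [hmain]
    set F' : ℝ → ℝ := fun u => (∫ t in Set.Ioc 0 u, E t) / Z with hF'def
    have hF'F : ∀ u ∈ Set.Icc (0:ℝ) 1, F u = F' u := by
      intro u hu
      rw [hF, hF'def, intervalIntegral.integral_of_le hu.1]
    have hF'cont : ContinuousOn F' (Set.Icc 0 1) :=
      (intervalIntegral.continuousOn_primitive hEint).div_const Z
    set q : ℝ → ℝ := fun u => ((N:ℝ) * (1-u)^(N-1)) * (1 - F' u)^N with hqdef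
    have hqmcont : ContinuousOn q (Set.Icc 0 1) :=
      (hqcont.continuousOn).mul ((continuousOn_const.sub hF'cont).pow N)
    have hbounds : ∀ u ∈ Set.Icc (0:ℝ) 1, 0 ≤ q u ∧ q u ≤ (N:ℝ) := by
      intro u hu1
      have hf0 : 0 ≤ F' u := by rw [← hF'F u hu1]; exact hFnn u hu1
      have hf1 : F' u ≤ 1 := by rw [← hF'F u hu1]; exact hFle1 u hu1
      have h1u : (0:ℝ) ≤ 1 - u := by linarith [hu1.2]
      have h1u' : (1:ℝ) - u ≤ 1 := by linarith [hu1.1]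
      have hp1 : (1-u)^(N-1) ≤ 1 := pow_le_one₀ h1u h1u'
      have hp1' : (0:ℝ) ≤ (1-u)^(N-1) := pow_nonneg h1u _
      have hp2 : (1-F' u)^N ≤ 1 := pow_le_one₀ (by linarith) (by linarith)
      have hp2' : (0:ℝ) ≤ (1-F' u)^N := pow_nonneg (by linarith) _
      constructor
      · exact mul_nonneg (mul_nonneg (Nat.cast_nonneg N) hp1') hp2'
      · calc q u ≤ ((N:ℝ) * (1-u)^(N-1)) * 1 :=
              mul_le_mul_of_nonneg_left hp2 (mul_nonneg (Nat.cast_nonneg N) hp1')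
          _ = (N:ℝ) * (1-u)^(N-1) := mul_one _
          _ ≤ (N:ℝ) * 1 := mul_le_mul_of_nonneg_left hp1 (Nat.cast_nonneg N)
          _ = (N:ℝ) := mul_one _
    have hqint : Integrable q (volume.restrict (Set.Ioo 0 1)) := by
      apply Integrable.mono' (integrable_const ((N:ℝ)))
      · exact ((hqmcont.mono Set.Ioo_subset_Icc_self).aestronglyMeasurable measurableSet_Ioo)
      · refine (ae_restrict_iff' measurableSet_Ioo).mpr ?_
        filter_upwards with u hu
        have hu1 : u ∈ Set.Icc (0:ℝ) 1 := Set.Ioo_subset_Icc_self hu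
        rw [Real.norm_eq_abs, abs_of_nonneg (hbounds u hu1).1]
        exact (hbounds u hu1).2
    have hqnn : 0 ≤ᵐ[volume.restrict (Set.Ioo 0 1)] q := by
      refine (ae_restrict_iff' measurableSet_Ioo).mpr ?_
      filter_upwards with u hu
      exact (hbounds u (Set.Ioo_subset_Icc_self hu)).1
    have hcongr : ∫⁻ u in Set.Ioo (0:ℝ) 1, g u * νY {v | u < G (m v)} ∂volume
        = ∫⁻ u in Set.Ioo (0:ℝ) 1, ENNReal.ofReal (q u) ∂volume := by
      apply setLIntegral_congr_fun measurableSet_Ioo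
      intro u hu
      have hu1 : u ∈ Set.Icc (0:ℝ) 1 := Set.Ioo_subset_Icc_self hu
      show g u * νY {v | u < G (m v)} = ENNReal.ofReal (q u)
      rw [hν_win u hu1.1 hu1.2]
      simp only [hgdef, hqdef]
      rw [← ENNReal.ofReal_mul (mul_nonneg (Nat.cast_nonneg N)
          (pow_nonneg (by linarith [hu1.2]) _))]
      congr 1
      rw [hF'F u hu1]
    rw [hcongr, ← MeasureTheory.ofReal_integral_eq_lintegral_ofReal hqint hqnn]
    congr 1
    rw [← integral_Ioc_eq_integral_Ioo, ← intervalIntegral.integral_of_le zero_le_one]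
    have hEq : ∀ u ∈ Set.uIcc (0:ℝ) 1, q u = (N:ℝ) * ((1 - F u)^N * (1-u)^(N-1)) := by
      intro u hu
      rw [Set.uIcc_of_le zero_le_one] at hu
      simp only [hqdef]
      rw [← hF'F u hu]
      ring
    rw [intervalIntegral.integral_congr hEq, intervalIntegral.integral_const_mul]
  constructor
  · have hgoal : {p : (Fin N → Y) × (Fin N → Y) | (⨅ j, r (p.2 j)) < ⨅ i, r (p.1 i)}
        = {p : (Fin N → Y) × (Fin N → Y) | m p.2 < m p.1} := by
      ext p; simp only [Set.mem_setOf_eq, hmdef]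
    rw [hgoal, hIooP]
    have hnonneg : 0 ≤ (N:ℝ) * ∫ u in (0:ℝ)..1, (1 - F u)^N * (1-u)^(N-1) := by
      apply mul_nonneg (Nat.cast_nonneg N)
      apply intervalIntegral.integral_nonneg zero_le_one
      intro u hu
      exact mul_nonneg (pow_nonneg (by linarith [hFle1 u hu]) _)
        (pow_nonneg (by linarith [hu.2]) _)
    rw [ENNReal.toReal_ofReal hnonneg]
  · have hgoal2 : {p : (Fin N → Y) × (Fin N → Y) | (⨅ i, r (p.1 i)) = ⨅ j, r (p.2 j)}
        = {p : (Fin N → Y) × (Fin N → Y) | m p.1 = m p.2} := by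
      ext p; simp only [Set.mem_setOf_eq, hmdef]
    rw [hgoal2]
    exact htie
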